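/- Let A ∈ ℝ^{n×n} be symmetric positive definite and B ∈ ℝ^{k×n} have full row rank. Define Σ := A⁻¹Bᵀ(BA⁻¹Bᵀ)⁻¹B and Π := I - Σ. Then ‖Π‖ ≤ √(λmax(A)/λmin(A)) and ‖Σ‖ ≤ √(λmax(A)/λmin(A)), where ‖·‖ denotes the operator 2-norm. -/

import Mathlib

open Matrix

private theorem rayleigh_aux {n : ℕ} (A : Matrix (Fin n) (Fin n) ℝ) (hA : A.PosDef)
    (lmax lmin : ℝ)
    (hmax : IsGreatest (Set.range hA.1.eigenvalues) lmax)
    (hmin : IsLeast (Set.range hA.1.eigenvalues) lmin)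
    (w : Fin n → ℝ) :
    lmin * (w ⬝ᵥ w) ≤ w ⬝ᵥ (A *ᵥ w) ∧ w ⬝ᵥ (A *ᵥ w) ≤ lmax * (w ⬝ᵥ w) := by
  set U : Matrix (Fin n) (Fin n) ℝ := (hA.1.eigenvectorUnitary : Matrix (Fin n) (Fin n) ℝ) with hU
  set u : Fin n → ℝ := (star U) *ᵥ w with hu
  have hdiag : A = U * diagonal (RCLike.ofReal ∘ hA.1.eigenvalues) * star U :=
    hA.1.spectral_theorem
  have hDre : (diagonal (RCLike.ofReal ∘ hA.1.eigenvalues) : Matrix (Fin n) (Fin n) ℝ)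
      = diagonal hA.1.eigenvalues := by congr 1
  have hUU : U * star U = 1 := Matrix.mem_unitaryGroup_iff.mp hA.1.eigenvectorUnitary.2
  have hUt : Uᵀ = star U := (Matrix.conjTranspose_eq_transpose_of_trivial U).symm
  have hvm : ∀ x : Fin n → ℝ, w ⬝ᵥ (U *ᵥ x) = u ⬝ᵥ x := by
    intro x
    rw [dotProduct_mulVec, ← mulVec_transpose, hUt, hu]
  have hq : w ⬝ᵥ (A *ᵥ w) = ∑ i, hA.1.eigenvalues i * (u i)^2 := by
    conv_lhs => rw [hdiag, hDre]
    rw [← mulVec_mulVec, ← mulVec_mulVec, hvm, ← hu]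
    simp only [dotProduct, mulVec_diagonal, sq]
    exact Finset.sum_congr rfl fun i _ => by ring
  have hww : w ⬝ᵥ w = ∑ i, (u i)^2 := by
    have := hvm ((star U) *ᵥ w)
    rw [mulVec_mulVec, hUU, one_mulVec] at this
    rw [this, ← hu]
    simp [dotProduct, sq]
  have hunn : ∀ i, 0 ≤ (u i)^2 := fun i => sq_nonneg _
  constructor
  · rw [hq, hww, Finset.mul_sum]
    exact Finset.sum_le_sum fun i _ => mul_le_mul_of_nonneg_right (hmin.2 ⟨i, rfl⟩) (hunn i)
  · rw [hq, hww, Finset.mul_sum]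
    exact Finset.sum_le_sum fun i _ => mul_le_mul_of_nonneg_right (hmax.2 ⟨i, rfl⟩) (hunn i)

/-- For symmetric positive definite `A` and full-row-rank `B`, the oblique projections
`Σ = A⁻¹Bᵀ(BA⁻¹Bᵀ)⁻¹B` and `Π = I - Σ` satisfy
`‖Π v‖ ≤ √(λmax/λmin)‖v‖` and `‖Σ v‖ ≤ √(λmax/λmin)‖v‖` in the Euclidean norm,
i.e. their operator 2-norms are bounded by `√(λmax(A)/λmin(A))`. -/
theorem oblique_projection_norm_bound
    {n k : ℕ} (A : Matrix (Fin n) (Fin n) ℝ) (B : Matrix (Fin k) (Fin n) ℝ)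
    (hA : A.PosDef) (hB : B.rank = k)
    (lmax lmin : ℝ)
    (hmax : IsGreatest (Set.range hA.1.eigenvalues) lmax)
    (hmin : IsLeast (Set.range hA.1.eigenvalues) lmin)
    (Sg Pg : Matrix (Fin n) (Fin n) ℝ)
    (hSg : Sg = A⁻¹ * Bᵀ * (B * A⁻¹ * Bᵀ)⁻¹ * B)
    (hPg : Pg = 1 - Sg) :
    (∀ v : Fin n → ℝ,
        Real.sqrt (∑ i, (Pg.mulVec v i) ^ 2) ≤
          Real.sqrt (lmax / lmin) * Real.sqrt (∑ i, (v i) ^ 2)) ∧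
    (∀ v : Fin n → ℝ,
        Real.sqrt (∑ i, (Sg.mulVec v i) ^ 2) ≤
          Real.sqrt (lmax / lmin) * Real.sqrt (∑ i, (v i) ^ 2)) := by
  -- `M := B * A⁻¹ * Bᵀ` is positive definite, hence invertible
  have hAinv : A⁻¹.PosDef := hA.inv
  have hM : (B * A⁻¹ * Bᵀ).PosDef := by
    have hLI : LinearIndependent ℝ (fun i => B i) := by
      rw [linearIndependent_iff_card_eq_finrank_span]
      rw [Fintype.card_fin, Set.finrank]
      exact hB.symm.trans (Matrix.rank_eq_finrank_span_row B)
    have hInj : Function.Injective B.vecMul := Matrix.vecMul_injective_iff.mpr hLI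
    refine PosDef.of_dotProduct_mulVec_pos ?_ ?_
    · have := (hAinv.posSemidef.mul_mul_conjTranspose_same B).1
      rwa [conjTranspose_eq_transpose_of_trivial] at this
    · intro x hx
      have hy : B.vecMul x ≠ 0 := fun h => hx (hInj (h.trans (Matrix.zero_vecMul B).symm))
      have := hAinv.dotProduct_mulVec_pos hy
      simpa [← mulVec_mulVec, dotProduct_mulVec, star_mulVec, vecMul_vecMul,
        conjTranspose_eq_transpose_of_trivial, mulVec_transpose] using this
  set M := B * A⁻¹ * Bᵀ with hMdef
  haveI := hA.isUnit.invertible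
  haveI := hM.isUnit.invertible
  have hAA : A * A⁻¹ = 1 := Matrix.mul_inv_of_invertible A
  have hAT : Aᵀ = A := by
    have := hA.1
    rwa [IsHermitian, conjTranspose_eq_transpose_of_trivial] at this
  -- `Sg` is idempotent
  have hSS : Sg * Sg = Sg := by
    rw [hSg]
    calc A⁻¹ * Bᵀ * M⁻¹ * B * (A⁻¹ * Bᵀ * M⁻¹ * B)
        = A⁻¹ * Bᵀ * (M⁻¹ * (B * A⁻¹ * Bᵀ) * M⁻¹) * B := by
          simp only [Matrix.mul_assoc]
      _ = A⁻¹ * Bᵀ * M⁻¹ * B := by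
          rw [← hMdef, Matrix.inv_mul_of_invertible, Matrix.one_mul]
  -- `A * Sg` is symmetric
  have hSA : Sgᵀ * A = A * Sg := by
    have hASg : A * Sg = Bᵀ * M⁻¹ * B := by
      rw [hSg, ← Matrix.mul_assoc, ← Matrix.mul_assoc, ← Matrix.mul_assoc, hAA, Matrix.one_mul]
    have hMinvT : (M⁻¹)ᵀ = M⁻¹ := by
      rw [Matrix.transpose_nonsing_inv]
      congr 1
      have := hM.1
      rwa [IsHermitian, conjTranspose_eq_transpose_of_trivial] at this
    have hsym : (A * Sg)ᵀ = A * Sg := by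
      rw [hASg, transpose_mul, transpose_mul, transpose_transpose, hMinvT, Matrix.mul_assoc]
    calc Sgᵀ * A = Sgᵀ * Aᵀ := by rw [hAT]
      _ = (A * Sg)ᵀ := (transpose_mul A Sg).symm
      _ = A * Sg := hsym
  -- self-adjointness identities for the quadratic form
  have hSAS : Sgᵀ * A * Sg = A * Sg := by
    rw [hSA, Matrix.mul_assoc, hSS]
  have hPAP : Pgᵀ * A * Pg = A * Pg := by
    rw [hPg, transpose_sub, transpose_one]
    have h1 : (1 - Sgᵀ) * A = A - A * Sg := by rw [Matrix.sub_mul, Matrix.one_mul, hSA]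
    rw [h1, Matrix.sub_mul, Matrix.mul_sub, Matrix.mul_sub, Matrix.mul_one, Matrix.mul_one,
      Matrix.mul_assoc, hSS]
    abel
  -- the quadratic form of a projected vector
  have hform : ∀ (P : Matrix (Fin n) (Fin n) ℝ) (v : Fin n → ℝ),
      (P *ᵥ v) ⬝ᵥ (A *ᵥ (P *ᵥ v)) = v ⬝ᵥ ((Pᵀ * A * P) *ᵥ v) := by
    intro P v
    rw [← mulVec_mulVec, ← mulVec_mulVec, ← vecMul_transpose]
    conv_rhs => rw [dotProduct_mulVec]
  have hnn : ∀ x : Fin n → ℝ, 0 ≤ x ⬝ᵥ (A *ᵥ x) := by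
    intro x
    simpa using hA.posSemidef.dotProduct_mulVec_nonneg x
  -- splitting of the quadratic form
  have hsplit : ∀ v : Fin n → ℝ,
      v ⬝ᵥ ((A * Sg) *ᵥ v) + v ⬝ᵥ ((A * Pg) *ᵥ v) = v ⬝ᵥ (A *ᵥ v) := by
    intro v
    rw [← dotProduct_add, ← Matrix.add_mulVec, ← Matrix.mul_add, hPg]
    simp
  -- main quadratic bounds for Sg and Pg
  have hposS : ∀ v : Fin n → ℝ, 0 ≤ v ⬝ᵥ ((A * Sg) *ᵥ v) := by
    intro v; rw [← hSAS, ← hform]; exact hnn _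
  have hposP : ∀ v : Fin n → ℝ, 0 ≤ v ⬝ᵥ ((A * Pg) *ᵥ v) := by
    intro v; rw [← hPAP, ← hform]; exact hnn _
  have keyS : ∀ v : Fin n → ℝ, v ⬝ᵥ ((A * Sg) *ᵥ v) ≤ v ⬝ᵥ (A *ᵥ v) := by
    intro v; have := hsplit v; have := hposP v; linarith
  have keyP : ∀ v : Fin n → ℝ, v ⬝ᵥ ((A * Pg) *ᵥ v) ≤ v ⬝ᵥ (A *ᵥ v) := by
    intro v; have := hsplit v; have := hposS v; linarith
  -- positivity of eigenvalue bounds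
  obtain ⟨i₀, hi₀⟩ := hmin.1
  have hlmin_pos : 0 < lmin := hi₀ ▸ hA.eigenvalues_pos i₀
  have hlmax_pos : 0 < lmax := lt_of_lt_of_le hlmin_pos (hmax.2 ⟨i₀, hi₀⟩)
  have hratio : (0:ℝ) ≤ lmax / lmin := le_of_lt (div_pos hlmax_pos hlmin_pos)
  -- the final bound for any matrix P with Pᵀ A P = A P
  have final : ∀ (P : Matrix (Fin n) (Fin n) ℝ), Pᵀ * A * P = A * P →
      (∀ v : Fin n → ℝ, v ⬝ᵥ ((A * P) *ᵥ v) ≤ v ⬝ᵥ (A *ᵥ v)) →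
      ∀ v : Fin n → ℝ,
        Real.sqrt (∑ i, (P.mulVec v i) ^ 2) ≤
          Real.sqrt (lmax / lmin) * Real.sqrt (∑ i, (v i) ^ 2) := by
    intro P hP hle v
    set w := P *ᵥ v with hw
    have hqw : w ⬝ᵥ (A *ᵥ w) = v ⬝ᵥ ((A * P) *ᵥ v) := by rw [hw, hform, hP]
    have h1 : lmin * (w ⬝ᵥ w) ≤ w ⬝ᵥ (A *ᵥ w) := (rayleigh_aux A hA lmax lmin hmax hmin w).1
    have h2 : v ⬝ᵥ (A *ᵥ v) ≤ lmax * (v ⬝ᵥ v) := (rayleigh_aux A hA lmax lmin hmax hmin v).2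
    have h3 : v ⬝ᵥ ((A * P) *ᵥ v) ≤ v ⬝ᵥ (A *ᵥ v) := hle v
    have hchain : lmin * (w ⬝ᵥ w) ≤ lmax * (v ⬝ᵥ v) := by
      calc lmin * (w ⬝ᵥ w) ≤ w ⬝ᵥ (A *ᵥ w) := h1
        _ = v ⬝ᵥ ((A * P) *ᵥ v) := hqw
        _ ≤ v ⬝ᵥ (A *ᵥ v) := h3
        _ ≤ lmax * (v ⬝ᵥ v) := h2
    have hineq : w ⬝ᵥ w ≤ (lmax / lmin) * (v ⬝ᵥ v) := by
      rw [div_mul_eq_mul_div, le_div_iff₀ hlmin_pos]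
      nlinarith [hchain]
    have hsum_w : ∑ i, (P.mulVec v i) ^ 2 = w ⬝ᵥ w := by
      simp [hw, dotProduct, sq]
    have hsum_v : ∑ i, (v i) ^ 2 = v ⬝ᵥ v := by
      simp [dotProduct, sq]
    rw [hsum_w, ← Real.sqrt_mul hratio, hsum_v]
    exact Real.sqrt_le_sqrt hineq
  exact ⟨final Pg hPAP keyP, final Sg hSAS keyS⟩
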